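/- Let G be a topological group acting on spaces S₂ and S₃ via a continuous homomorphism φ : G₂ → G₃ (G acting on S₃ through φ), and let f : S₂ → S₃ be a φ-equivariant Serre fibration. Then the induced map on Borel constructions ψ : S₂//G₂ → S₃//G₃, with appropriate models of the universal bundles, is a Serre fibration. -/

import Mathlib

open unitInterval

/-- The closed `i`-dimensional disc `Dⁱ`. -/
abbrev Disc (i : ℕ) := (Metric.closedBall (0 : EuclideanSpace ℝ (Fin i)) 1 :
    Set (EuclideanSpace ℝ (Fin i)))

/-- A continuous map is a *Serre fibration* if it has the homotopy lifting property with
respect to the inclusions `Dⁱ × {0} ↪ Dⁱ × I` for all `i ≥ 0`. -/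
def IsSerreFibration {X Y : Type*} [TopologicalSpace X] [TopologicalSpace Y] (f : X → Y) : Prop :=
  Continuous f ∧
  ∀ (i : ℕ) (H : C(Disc i × I, Y)) (h₀ : C(Disc i, X)),
    (∀ d, f (h₀ d) = H (d, 0)) →
    ∃ H' : C(Disc i × I, X), (∀ p, f (H' p) = H p) ∧ (∀ d, H' (d, 0) = h₀ d)

/-- Descent of equivariant fibrations to Borel constructions: given a continuous
homomorphism `φ : G₂ → G₃` of topological groups, a `φ`-equivariant Serre fibration
`f : S₂ → S₃`, and models `E₂`, `E₃` of the universal bundles `EG₂`, `EG₃` (contractible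
free spaces with principal quotients, here taking `E₂ × E₃` with the diagonal `G₂`-action,
through `φ` on the second factor, as a model for `EG₂`), the induced map of Borel
constructions `ψ : S₂ ⫽ G₂ = (S₂ × E₂ × E₃)/G₂ → (S₃ × E₃)/G₃ = S₃ ⫽ G₃` is a Serre
fibration. -/
theorem borel_construction_descent_serreFibration
    {G₂ G₃ : Type*} [Group G₂] [Group G₃] [TopologicalSpace G₂] [TopologicalSpace G₃]
    [IsTopologicalGroup G₂] [IsTopologicalGroup G₃]
    {S₂ S₃ : Type*} [TopologicalSpace S₂] [TopologicalSpace S₃]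
    [MulAction G₂ S₂] [MulAction G₃ S₃] [ContinuousSMul G₂ S₂] [ContinuousSMul G₃ S₃]
    (φ : G₂ →* G₃) (hφ : Continuous φ)
    (f : S₂ → S₃) (hequiv : ∀ (g : G₂) (x : S₂), f (g • x) = φ g • f x)
    (hf : IsSerreFibration f)
    -- models of the universal bundles: contractible free `G`-spaces with principal
    -- (in particular Serre-fibration) quotients
    (E₂ E₃ : Type*) [TopologicalSpace E₂] [TopologicalSpace E₃]
    [MulAction G₂ E₂] [MulAction G₃ E₃] [ContinuousSMul G₂ E₂] [ContinuousSMul G₃ E₃]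
    [ContractibleSpace E₂] [ContractibleSpace E₃]
    (hfree₂ : ∀ (g : G₂) (e : E₂), g • e = e → g = 1)
    (hfree₃ : ∀ (g : G₃) (e : E₃), g • e = e → g = 1)
    (hp₂ : IsSerreFibration (Quot.mk fun a b : S₂ × E₂ × E₃ =>
      ∃ g : G₂, b = (g • a.1, g • a.2.1, φ g • a.2.2)))
    (hp₃ : IsSerreFibration (Quot.mk fun a b : S₃ × E₃ => ∃ g : G₃, b = (g • a.1, g • a.2)))
    -- the induced map on Borel constructions
    (ψ : Quot (fun a b : S₂ × E₂ × E₃ => ∃ g : G₂, b = (g • a.1, g • a.2.1, φ g • a.2.2)) →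
      Quot (fun a b : S₃ × E₃ => ∃ g : G₃, b = (g • a.1, g • a.2)))
    (hψ : ∀ (x : S₂) (e₂ : E₂) (e₃ : E₃),
      ψ (Quot.mk _ (x, e₂, e₃)) = Quot.mk _ (f x, e₃)) :
    IsSerreFibration ψ := by
  have hψq : ∀ a : S₂ × E₂ × E₃,
      ψ (Quot.mk _ a) = Quot.mk (fun a b : S₃ × E₃ => ∃ g : G₃, b = (g • a.1, g • a.2))
        (f a.1, a.2.2) :=
    fun a => hψ a.1 a.2.1 a.2.2
  constructor
  · -- continuity of ψ
    refine isQuotientMap_quot_mk.continuous_iff.mpr ?_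
    have : (ψ ∘ Quot.mk _) = fun a : S₂ × E₂ × E₃ =>
        Quot.mk (fun a b : S₃ × E₃ => ∃ g : G₃, b = (g • a.1, g • a.2)) (f a.1, a.2.2) :=
      funext hψq
    rw [this]
    exact continuous_quot_mk.comp
      ((hf.1.comp continuous_fst).prodMk (continuous_snd.comp continuous_snd))
  · intro i H h₀ hcomp
    -- the contraction of the disc
    have hc : ∀ (p : Disc i × I), (p.2 : ℝ) • (p.1 : EuclideanSpace ℝ (Fin i)) ∈
        Metric.closedBall (0 : EuclideanSpace ℝ (Fin i)) 1 := by
      intro p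
      rcases p with ⟨⟨x, hx⟩, t⟩
      rw [mem_closedBall_zero_iff] at *
      calc ‖(t : ℝ) • x‖ = |(t : ℝ)| * ‖x‖ := by rw [norm_smul, Real.norm_eq_abs]
        _ ≤ 1 * 1 := by
            apply mul_le_mul _ hx (norm_nonneg x) zero_le_one
            rw [abs_of_nonneg t.2.1]; exact t.2.2
        _ = 1 := one_mul 1
    let c : C(Disc i × I, Disc i) :=
      ⟨fun p => ⟨(p.2 : ℝ) • (p.1 : EuclideanSpace ℝ (Fin i)), hc p⟩, by
        apply Continuous.subtype_mk
        exact ((continuous_subtype_val.comp continuous_snd).smul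
          (continuous_subtype_val.comp continuous_fst))⟩
    have hz : (0 : EuclideanSpace ℝ (Fin i)) ∈
        Metric.closedBall (0 : EuclideanSpace ℝ (Fin i)) 1 :=
      Metric.mem_closedBall_self zero_le_one
    obtain ⟨p₀, hp₀⟩ := Quot.exists_rep (h₀ ⟨0, hz⟩)
    have hc0 : ∀ d : Disc i, c (d, 0) = ⟨0, hz⟩ := by
      intro d
      apply Subtype.ext
      show ((0 : I) : ℝ) • (d : EuclideanSpace ℝ (Fin i)) = 0
      simp
    have hc1 : ∀ d : Disc i, c (d, 1) = d := by
      intro d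
      apply Subtype.ext
      show ((1 : I) : ℝ) • (d : EuclideanSpace ℝ (Fin i)) = d
      simp
    -- lift h₀ to the total space, using contractibility of the disc
    obtain ⟨L, hL, hL0⟩ := hp₂.2 i (h₀.comp c) (ContinuousMap.const _ p₀) (by
      intro d
      show Quot.mk _ p₀ = h₀ (c (d, 0))
      rw [hc0 d, hp₀])
    let lift₀ : C(Disc i, S₂ × E₂ × E₃) :=
      L.comp ⟨fun d => (d, 1), continuous_id.prodMk continuous_const⟩
    have hlift₀ : ∀ d, Quot.mk _ (lift₀ d) = h₀ d := by
      intro d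
      show Quot.mk _ (L (d, 1)) = h₀ d
      rw [hL (d, 1)]
      show h₀ (c (d, 1)) = h₀ d
      rw [hc1 d]
    -- lift H to S₃ × E₃ using hp₃
    let g₀ : C(Disc i, S₃ × E₃) :=
      ⟨fun d => (f (lift₀ d).1, (lift₀ d).2.2),
        ((hf.1.comp (continuous_fst.comp lift₀.continuous)).prodMk
          (continuous_snd.comp (continuous_snd.comp lift₀.continuous)))⟩
    obtain ⟨H₃, hH₃, hH₃0⟩ := hp₃.2 i H g₀ (by
      intro d
      show Quot.mk _ (f (lift₀ d).1, (lift₀ d).2.2) = H (d, 0)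
      rw [← hψq (lift₀ d), hlift₀ d, hcomp d])
    -- lift the S₃-component through f using hf
    obtain ⟨K', hK', hK'0⟩ := hf.2 i
      ⟨fun p => (H₃ p).1, continuous_fst.comp H₃.continuous⟩
      ⟨fun d => (lift₀ d).1, continuous_fst.comp lift₀.continuous⟩ (by
        intro d
        show f (lift₀ d).1 = (H₃ (d, 0)).1
        rw [hH₃0 d]
        rfl)
    -- assemble the lifted homotopy
    refine ⟨⟨fun p => Quot.mk _ (K' p, (lift₀ p.1).2.1, (H₃ p).2), ?_⟩, ?_, ?_⟩
    · exact continuous_quot_mk.comp (K'.continuous.prodMk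
        ((continuous_fst.comp (continuous_snd.comp
          (lift₀.continuous.comp continuous_fst))).prodMk
          (continuous_snd.comp H₃.continuous)))
    · intro p
      show ψ (Quot.mk _ (K' p, (lift₀ p.1).2.1, (H₃ p).2)) = H p
      rw [hψ (K' p) (lift₀ p.1).2.1 (H₃ p).2, hK' p]
      exact hH₃ p
    · intro d
      show Quot.mk _ (K' (d, 0), (lift₀ d).2.1, (H₃ (d, 0)).2) = h₀ d
      rw [hK'0 d, hH₃0 d]
      show Quot.mk _ ((lift₀ d).1, (lift₀ d).2.1, (lift₀ d).2.2) = h₀ d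
      rw [show ((lift₀ d).1, (lift₀ d).2.1, (lift₀ d).2.2) = lift₀ d from rfl]
      exact hlift₀ d
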